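/- Let Ẽ be a subset of ℤ² such that 0 ∉ Ẽ, Ẽ = −Ẽ, Ẽ generates ℤ² as an abelian group, and every 2-element ℚ-linearly independent subset of Ẽ generates ℤ². Then exactly one of the following holds: (a) there exists a ℤ-basis (a, b) of ℤ² with Ẽ = {a, −a, b, −b} (so |Ẽ| = 4); or (b) there exists a ℤ-basis (a, b) of ℤ² with Ẽ = {a, −a, b, −b, a + b, −(a + b)} (so |Ẽ| = 6). -/

import Mathlib

lemma det_pm_one {a b : ℤ × ℤ} (h : AddSubgroup.closure ({a, b} : Set (ℤ × ℤ)) = ⊤) :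
    a.1 * b.2 - a.2 * b.1 = 1 ∨ a.1 * b.2 - a.2 * b.1 = -1 := by
  have h1 : ((1, 0) : ℤ × ℤ) ∈ AddSubgroup.closure ({a, b} : Set (ℤ × ℤ)) := by
    rw [h]; trivial
  have h2 : ((0, 1) : ℤ × ℤ) ∈ AddSubgroup.closure ({a, b} : Set (ℤ × ℤ)) := by
    rw [h]; trivial
  rw [AddSubgroup.mem_closure_pair] at h1 h2
  obtain ⟨m, n, hmn⟩ := h1
  obtain ⟨p, q, hpq⟩ := h2
  have e1 : m * a.1 + n * b.1 = 1 := by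
    have := congrArg Prod.fst hmn; simpa [Prod.smul_def] using this
  have e2 : m * a.2 + n * b.2 = 0 := by
    have := congrArg Prod.snd hmn; simpa [Prod.smul_def] using this
  have e3 : p * a.1 + q * b.1 = 0 := by
    have := congrArg Prod.fst hpq; simpa [Prod.smul_def] using this
  have e4 : p * a.2 + q * b.2 = 1 := by
    have := congrArg Prod.snd hpq; simpa [Prod.smul_def] using this
  have key : (m * q - n * p) * (a.1 * b.2 - a.2 * b.1) = 1 := by
    linear_combination (p * a.2 + q * b.2) * e1 - (p * a.1 + q * b.1) * e2 + e4
  rcases Int.isUnit_iff.mp (IsUnit.of_mul_eq_one _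
      (by linarith [key] : (a.1 * b.2 - a.2 * b.1) * (m * q - n * p) = 1)) with h | h
  · left; exact h
  · right; exact h

lemma li_pair {a b : ℤ × ℤ} (hab : a ≠ b) (hd : a.1 * b.2 - a.2 * b.1 ≠ 0) :
    LinearIndependent ℚ
      (fun s : ({a, b} : Set (ℤ × ℤ)) =>
        ((((s : ℤ × ℤ).1 : ℚ), ((s : ℤ × ℤ).2 : ℚ)) : ℚ × ℚ)) := by
  have ha : a ∈ ({a, b} : Set (ℤ × ℤ)) := by simp
  have hb : b ∈ ({a, b} : Set (ℤ × ℤ)) := by simp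
  classical
  let e : Fin 2 ≃ ({a, b} : Set (ℤ × ℤ)) :=
    { toFun := ![⟨a, ha⟩, ⟨b, hb⟩]
      invFun := fun s => if (s : ℤ × ℤ) = a then 0 else 1
      left_inv := by
        intro i; fin_cases i <;> simp [hab.symm]
      right_inv := by
        rintro ⟨s, hs⟩
        rcases hs with rfl | hs
        · simp
        · rcases hs with rfl
          simp [Ne.symm hab] }
  rw [← linearIndependent_equiv e]
  have hcomp : ((fun s : ({a, b} : Set (ℤ × ℤ)) =>
        ((((s : ℤ × ℤ).1 : ℚ), ((s : ℤ × ℤ).2 : ℚ)) : ℚ × ℚ)) ∘ e) =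
      ![((a.1 : ℚ), (a.2 : ℚ)), ((b.1 : ℚ), (b.2 : ℚ))] := by
    funext i; fin_cases i <;> rfl
  rw [hcomp]
  rw [LinearIndependent.pair_iff]
  intro s t hst
  have h1 : s * (a.1 : ℚ) + t * (b.1 : ℚ) = 0 := by
    have := congrArg Prod.fst hst; simpa [Prod.smul_def] using this
  have h2 : s * (a.2 : ℚ) + t * (b.2 : ℚ) = 0 := by
    have := congrArg Prod.snd hst; simpa [Prod.smul_def] using this
  have hdq : ((a.1 : ℚ) * b.2 - (a.2 : ℚ) * b.1) ≠ 0 := by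
    intro h
    apply hd
    have : ((a.1 * b.2 - a.2 * b.1 : ℤ) : ℚ) = 0 := by push_cast; linarith
    exact_mod_cast this
  constructor
  · have hs : s * ((a.1 : ℚ) * b.2 - (a.2 : ℚ) * b.1) = 0 := by
      linear_combination (b.2 : ℚ) * h1 - (b.1 : ℚ) * h2
    rcases mul_eq_zero.mp hs with h | h
    · exact h
    · exact absurd h hdq
  · have ht : t * ((a.1 : ℚ) * b.2 - (a.2 : ℚ) * b.1) = 0 := by
      linear_combination -(a.2 : ℚ) * h1 + (a.1 : ℚ) * h2
    rcases mul_eq_zero.mp ht with h | h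
    · exact h
    · exact absurd h hdq

lemma key2 (d u v e1 e2 a1 a2 b1 b2 : ℤ)
    (hd : d = 1 ∨ d = -1) (hu : u = 0 ∨ u = 1 ∨ u = -1) (hv : v = 0 ∨ v = 1 ∨ v = -1)
    (h1 : d * e1 = u * a1 + v * b1) (h2 : d * e2 = u * a2 + v * b2) :
    (e1 = 0 ∧ e2 = 0) ∨
    (e1 = a1 ∧ e2 = a2) ∨ (e1 = -a1 ∧ e2 = -a2) ∨
    (e1 = b1 ∧ e2 = b2) ∨ (e1 = -b1 ∧ e2 = -b2) ∨
    (e1 = a1 + b1 ∧ e2 = a2 + b2) ∨ (e1 = -(a1 + b1) ∧ e2 = -(a2 + b2)) ∨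
    (e1 = a1 - b1 ∧ e2 = a2 - b2) ∨ (e1 = -(a1 - b1) ∧ e2 = -(a2 - b2)) := by
  obtain rfl | rfl := hd <;> obtain rfl | rfl | rfl := hu <;> obtain rfl | rfl | rfl := hv
  · exact Or.inl ⟨by omega, by omega⟩
  · exact Or.inr <| Or.inr <| Or.inr <| Or.inl ⟨by omega, by omega⟩
  · exact Or.inr <| Or.inr <| Or.inr <| Or.inr <| Or.inl ⟨by omega, by omega⟩
  · exact Or.inr <| Or.inl ⟨by omega, by omega⟩
  · exact Or.inr <| Or.inr <| Or.inr <| Or.inr <| Or.inr <| Or.inl ⟨by omega, by omega⟩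
  · exact Or.inr <| Or.inr <| Or.inr <| Or.inr <| Or.inr <| Or.inr <| Or.inr <| Or.inl ⟨by omega, by omega⟩
  · exact Or.inr <| Or.inr <| Or.inl ⟨by omega, by omega⟩
  · exact Or.inr <| Or.inr <| Or.inr <| Or.inr <| Or.inr <| Or.inr <| Or.inr <| Or.inr ⟨by omega, by omega⟩
  · exact Or.inr <| Or.inr <| Or.inr <| Or.inr <| Or.inr <| Or.inr <| Or.inl ⟨by omega, by omega⟩
  · exact Or.inl ⟨by omega, by omega⟩
  · exact Or.inr <| Or.inr <| Or.inr <| Or.inr <| Or.inl ⟨by omega, by omega⟩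
  · exact Or.inr <| Or.inr <| Or.inr <| Or.inl ⟨by omega, by omega⟩
  · exact Or.inr <| Or.inr <| Or.inl ⟨by omega, by omega⟩
  · exact Or.inr <| Or.inr <| Or.inr <| Or.inr <| Or.inr <| Or.inr <| Or.inl ⟨by omega, by omega⟩
  · exact Or.inr <| Or.inr <| Or.inr <| Or.inr <| Or.inr <| Or.inr <| Or.inr <| Or.inr ⟨by omega, by omega⟩
  · exact Or.inr <| Or.inl ⟨by omega, by omega⟩
  · exact Or.inr <| Or.inr <| Or.inr <| Or.inr <| Or.inr <| Or.inr <| Or.inr <| Or.inl ⟨by omega, by omega⟩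
  · exact Or.inr <| Or.inr <| Or.inr <| Or.inr <| Or.inr <| Or.inl ⟨by omega, by omega⟩

lemma rel_det {a b : ℤ × ℤ} (m n : ℤ) (hmn : m ≠ 0 ∨ n ≠ 0)
    (h1 : m * a.1 + n * b.1 = 0) (h2 : m * a.2 + n * b.2 = 0) :
    a.1 * b.2 - a.2 * b.1 = 0 := by
  have hm : m * (a.1 * b.2 - a.2 * b.1) = 0 := by linear_combination b.2 * h1 - b.1 * h2
  have hn : n * (a.1 * b.2 - a.2 * b.1) = 0 := by linear_combination -a.2 * h1 + a.1 * h2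
  rcases hmn with hm0 | hn0
  · exact (mul_eq_zero.mp hm).resolve_left hm0
  · exact (mul_eq_zero.mp hn).resolve_left hn0

lemma nes {a b : ℤ × ℤ} (hd0 : a.1 * b.2 - a.2 * b.1 ≠ 0) :
    a ≠ 0 ∧ b ≠ 0 ∧ a + b ≠ 0 ∧ a ≠ b ∧ a ≠ -b ∧
      a ≠ a + b ∧ a ≠ -(a + b) ∧ b ≠ a + b ∧ b ≠ -(a + b) := by
  have comp : ∀ x y : ℤ × ℤ, x = y → x.1 = y.1 ∧ x.2 = y.2 := by
    rintro x y rfl; exact ⟨rfl, rfl⟩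
  refine ⟨?_, ?_, ?_, ?_, ?_, ?_, ?_, ?_, ?_⟩ <;> intro h <;> apply hd0 <;>
    obtain ⟨h1, h2⟩ := comp _ _ h
  · exact rel_det 1 0 (Or.inl one_ne_zero) (by simpa using h1) (by simpa using h2)
  · exact rel_det 0 1 (Or.inr one_ne_zero) (by simpa using h1) (by simpa using h2)
  · exact rel_det 1 1 (Or.inl one_ne_zero) (by simp at h1 ⊢; omega) (by simp at h2 ⊢; omega)
  · exact rel_det 1 (-1) (Or.inl one_ne_zero) (by simp at h1 ⊢; omega) (by simp at h2 ⊢; omega)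
  · exact rel_det 1 1 (Or.inl one_ne_zero) (by simp at h1 ⊢; omega) (by simp at h2 ⊢; omega)
  · exact rel_det 0 1 (Or.inr one_ne_zero) (by simp at h1 ⊢; omega) (by simp at h2 ⊢; omega)
  · exact rel_det 2 1 (Or.inl two_ne_zero) (by simp at h1 ⊢; omega) (by simp at h2 ⊢; omega)
  · exact rel_det 1 0 (Or.inl one_ne_zero) (by simp at h1 ⊢; omega) (by simp at h2 ⊢; omega)
  · exact rel_det 1 2 (Or.inl one_ne_zero) (by simp at h1 ⊢; omega) (by simp at h2 ⊢; omega)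

lemma myNegNe {x : ℤ × ℤ} (hx : x ≠ 0) : x ≠ -x := by
  intro h
  apply hx
  have h1 : x.1 = -x.1 := congrArg Prod.fst h
  have h2 : x.2 = -x.2 := congrArg Prod.snd h
  exact Prod.ext_iff.mpr ⟨by simp; omega, by simp; omega⟩

lemma encard4 {a b : ℤ × ℤ}
    (hd : a.1 * b.2 - a.2 * b.1 = 1 ∨ a.1 * b.2 - a.2 * b.1 = -1) :
    ({a, -a, b, -b} : Set (ℤ × ℤ)).encard = 4 := by
  have hd0 : a.1 * b.2 - a.2 * b.1 ≠ 0 := by rcases hd with h | h <;> omega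
  obtain ⟨ha0, hb0, hab0, hab, hanb, _, _, _, _⟩ := nes hd0
  have h1 : a ∉ ({-a, b, -b} : Set (ℤ × ℤ)) := by
    simp only [Set.mem_insert_iff, Set.mem_singleton_iff]
    push_neg
    exact ⟨myNegNe ha0, hab, hanb⟩
  have h2 : -a ∉ ({b, -b} : Set (ℤ × ℤ)) := by
    simp only [Set.mem_insert_iff, Set.mem_singleton_iff]
    push_neg
    constructor
    · intro h; exact hanb (neg_eq_iff_eq_neg.mp h)
    · intro h; exact hab (neg_injective h)
  have h3 : b ≠ -b := myNegNe hb0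
  rw [Set.encard_insert_of_notMem h1, Set.encard_insert_of_notMem h2, Set.encard_pair h3]
  rfl

lemma encard6 {a b : ℤ × ℤ}
    (hd : a.1 * b.2 - a.2 * b.1 = 1 ∨ a.1 * b.2 - a.2 * b.1 = -1) :
    ({a, -a, b, -b, a + b, -(a + b)} : Set (ℤ × ℤ)).encard = 6 := by
  have hd0 : a.1 * b.2 - a.2 * b.1 ≠ 0 := by rcases hd with h | h <;> omega
  obtain ⟨ha0, hb0, hab0, hab, hanb, hac, hanc, hbc, hbnc⟩ := nes hd0
  have h1 : a ∉ ({-a, b, -b, a + b, -(a + b)} : Set (ℤ × ℤ)) := by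
    simp only [Set.mem_insert_iff, Set.mem_singleton_iff]
    push_neg
    exact ⟨myNegNe ha0, hab, hanb, hac, hanc⟩
  have h2 : -a ∉ ({b, -b, a + b, -(a + b)} : Set (ℤ × ℤ)) := by
    simp only [Set.mem_insert_iff, Set.mem_singleton_iff]
    push_neg
    refine ⟨?_, ?_, ?_, ?_⟩
    · intro h; exact hanb (neg_eq_iff_eq_neg.mp h)
    · intro h; exact hab (neg_injective h)
    · intro h; exact hanc (neg_eq_iff_eq_neg.mp h)
    · intro h; exact hac (neg_injective h)
  have h3 : b ∉ ({-b, a + b, -(a + b)} : Set (ℤ × ℤ)) := by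
    simp only [Set.mem_insert_iff, Set.mem_singleton_iff]
    push_neg
    exact ⟨myNegNe hb0, hbc, hbnc⟩
  have h4 : -b ∉ ({a + b, -(a + b)} : Set (ℤ × ℤ)) := by
    simp only [Set.mem_insert_iff, Set.mem_singleton_iff]
    push_neg
    constructor
    · intro h; exact hbnc (neg_eq_iff_eq_neg.mp h)
    · intro h; exact hbc (neg_injective h)
  have h5 : (a + b) ≠ -(a + b) := myNegNe hab0
  rw [Set.encard_insert_of_notMem h1, Set.encard_insert_of_notMem h2,
    Set.encard_insert_of_notMem h3, Set.encard_insert_of_notMem h4, Set.encard_pair h5]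
  rfl

lemma exists_indep (E : Set (ℤ × ℤ)) (h0 : (0 : ℤ × ℤ) ∉ E)
    (hgen : AddSubgroup.closure E = ⊤) :
    ∃ a ∈ E, ∃ b ∈ E, a.1 * b.2 - a.2 * b.1 ≠ 0 := by
  by_contra hcon
  push_neg at hcon
  have hEne : E.Nonempty := by
    rcases Set.eq_empty_or_nonempty E with rfl | h
    · rw [AddSubgroup.closure_empty] at hgen
      have : ((1, 0) : ℤ × ℤ) ∈ (⊥ : AddSubgroup (ℤ × ℤ)) := by rw [hgen]; trivial
      simp [AddSubgroup.mem_bot, Prod.ext_iff] at this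
    · exact h
  obtain ⟨a, ha⟩ := hEne
  have ha0 : a ≠ 0 := fun h => h0 (h ▸ ha)
  set H : AddSubgroup (ℤ × ℤ) :=
    { carrier := {x | a.1 * x.2 - a.2 * x.1 = 0}
      add_mem' := by
        intro x y hx hy
        simp only [Set.mem_setOf_eq, Prod.fst_add, Prod.snd_add] at *
        ring_nf
        ring_nf at hx hy
        linarith
      zero_mem' := by simp
      neg_mem' := by
        intro x hx
        simp only [Set.mem_setOf_eq, Prod.fst_neg, Prod.snd_neg] at *
        linarith } with hH
  have hle : AddSubgroup.closure E ≤ H :=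
    (AddSubgroup.closure_le H).mpr (fun x hx => hcon a ha x hx)
  rw [hgen] at hle
  have h1 : ((1, 0) : ℤ × ℤ) ∈ H := hle trivial
  have h2 : ((0, 1) : ℤ × ℤ) ∈ H := hle trivial
  simp [hH, AddSubgroup.mem_mk, Set.mem_setOf_eq] at h1 h2
  exact ha0 (Prod.ext_iff.mpr ⟨h2, h1⟩)

/-- If `Ẽ ⊆ ℤ²` satisfies `0 ∉ Ẽ`, `Ẽ = -Ẽ`, `Ẽ` generates `ℤ²` as an abelian group, and
every 2-element `ℚ`-linearly independent subset of `Ẽ` generates `ℤ²`, then exactly one of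
the following holds: (a) `Ẽ = {a, -a, b, -b}` for a `ℤ`-basis `(a, b)` of `ℤ²`, or
(b) `Ẽ = {a, -a, b, -b, a + b, -(a + b)}` for a `ℤ`-basis `(a, b)` of `ℤ²` (where a
`ℤ`-basis means a pair with determinant `a₁b₂ - a₂b₁ = ±1`). -/
theorem unimodular_rank_two_classification (E : Set (ℤ × ℤ))
    (h0 : (0 : ℤ × ℤ) ∉ E) (hneg : E = -E) (hgen : AddSubgroup.closure E = ⊤)
    (hbasis : ∀ S ⊆ E, S.ncard = 2 →
      LinearIndependent ℚ
        (fun s : S => ((((s : ℤ × ℤ).1 : ℚ), ((s : ℤ × ℤ).2 : ℚ)) : ℚ × ℚ)) →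
      AddSubgroup.closure S = ⊤) :
    Xor'
      (∃ a b : ℤ × ℤ, (a.1 * b.2 - a.2 * b.1 = 1 ∨ a.1 * b.2 - a.2 * b.1 = -1) ∧
        E = {a, -a, b, -b})
      (∃ a b : ℤ × ℤ, (a.1 * b.2 - a.2 * b.1 = 1 ∨ a.1 * b.2 - a.2 * b.1 = -1) ∧
        E = {a, -a, b, -b, a + b, -(a + b)}) := by
  have hnegmem : ∀ x ∈ E, -x ∈ E := by
    intro x hx
    rw [hneg]
    simpa using hx
  have key : ∀ x ∈ E, ∀ y ∈ E, x.1 * y.2 - x.2 * y.1 ≠ 0 →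
      (x.1 * y.2 - x.2 * y.1 = 1 ∨ x.1 * y.2 - x.2 * y.1 = -1) := by
    intro x hx y hy hxy
    have hxyne : x ≠ y := by rintro rfl; apply hxy; ring
    apply det_pm_one
    exact hbasis {x, y}
      (by rw [Set.insert_subset_iff]; exact ⟨hx, Set.singleton_subset_iff.mpr hy⟩)
      (Set.ncard_pair hxyne) (li_pair hxyne hxy)
  obtain ⟨a, ha, b, hb, hd0⟩ := exists_indep E h0 hgen
  have hd := key a ha b hb hd0
  -- every element of E is one of the eight candidates
  have hsub : ∀ e ∈ E, e = a ∨ e = -a ∨ e = b ∨ e = -b ∨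
      e = a + b ∨ e = -(a + b) ∨ e = a - b ∨ e = -(a - b) := by
    intro e he
    have hu : e.1 * b.2 - e.2 * b.1 = 0 ∨ e.1 * b.2 - e.2 * b.1 = 1 ∨
        e.1 * b.2 - e.2 * b.1 = -1 := by
      by_cases h : e.1 * b.2 - e.2 * b.1 = 0
      · exact Or.inl h
      · exact Or.inr (key e he b hb h)
    have hv : a.1 * e.2 - a.2 * e.1 = 0 ∨ a.1 * e.2 - a.2 * e.1 = 1 ∨
        a.1 * e.2 - a.2 * e.1 = -1 := by
      by_cases h : a.1 * e.2 - a.2 * e.1 = 0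
      · exact Or.inl h
      · exact Or.inr (key a ha e he h)
    have h1 : (a.1 * b.2 - a.2 * b.1) * e.1 =
        (e.1 * b.2 - e.2 * b.1) * a.1 + (a.1 * e.2 - a.2 * e.1) * b.1 := by ring
    have h2 : (a.1 * b.2 - a.2 * b.1) * e.2 =
        (e.1 * b.2 - e.2 * b.1) * a.2 + (a.1 * e.2 - a.2 * e.1) * b.2 := by ring
    rcases key2 _ _ _ e.1 e.2 a.1 a.2 b.1 b.2 hd hu hv h1 h2 with
      h | h | h | h | h | h | h | h | h
    · exact absurd he (by
        rw [show e = 0 from Prod.ext_iff.mpr ⟨by simpa using h.1, by simpa using h.2⟩]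
        exact h0)
    · exact Or.inl (Prod.ext_iff.mpr ⟨h.1, h.2⟩)
    · exact Or.inr <| Or.inl (Prod.ext_iff.mpr ⟨by simpa using h.1, by simpa using h.2⟩)
    · exact Or.inr <| Or.inr <| Or.inl (Prod.ext_iff.mpr ⟨h.1, h.2⟩)
    · exact Or.inr <| Or.inr <| Or.inr <| Or.inl
        (Prod.ext_iff.mpr ⟨by simpa using h.1, by simpa using h.2⟩)
    · exact Or.inr <| Or.inr <| Or.inr <| Or.inr <| Or.inl
        (Prod.ext_iff.mpr ⟨by simpa using h.1, by simpa using h.2⟩)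
    · exact Or.inr <| Or.inr <| Or.inr <| Or.inr <| Or.inr <| Or.inl
        (Prod.ext_iff.mpr ⟨by simpa using h.1, by simpa using h.2⟩)
    · exact Or.inr <| Or.inr <| Or.inr <| Or.inr <| Or.inr <| Or.inr <| Or.inl
        (Prod.ext_iff.mpr ⟨by simpa using h.1, by simpa using h.2⟩)
    · exact Or.inr <| Or.inr <| Or.inr <| Or.inr <| Or.inr <| Or.inr <| Or.inr
        (Prod.ext_iff.mpr ⟨by simpa using h.1, by simpa using h.2⟩)
  -- a+b and a-b cannot both lie in E
  have hnotboth : ¬(a + b ∈ E ∧ a - b ∈ E) := by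
    rintro ⟨hp, hm⟩
    have hdet : (a + b).1 * (a - b).2 - (a + b).2 * (a - b).1 =
        -2 * (a.1 * b.2 - a.2 * b.1) := by
      simp only [Prod.fst_add, Prod.snd_add, Prod.fst_sub, Prod.snd_sub]
      ring
    have hne : (a + b).1 * (a - b).2 - (a + b).2 * (a - b).1 ≠ 0 := by
      rw [hdet]; rcases hd with h | h <;> omega
    have := key _ hp _ hm hne
    rw [hdet] at this
    rcases hd with h | h <;> omega
  -- exclusivity of the two alternatives
  have hexcl : ¬((∃ a b : ℤ × ℤ,
        (a.1 * b.2 - a.2 * b.1 = 1 ∨ a.1 * b.2 - a.2 * b.1 = -1) ∧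
        E = {a, -a, b, -b}) ∧
      (∃ a b : ℤ × ℤ, (a.1 * b.2 - a.2 * b.1 = 1 ∨ a.1 * b.2 - a.2 * b.1 = -1) ∧
        E = {a, -a, b, -b, a + b, -(a + b)})) := by
    rintro ⟨⟨a1, b1, hd1, hE1⟩, ⟨a2, b2, hd2, hE2⟩⟩
    have h4 : E.encard = 4 := by rw [hE1]; exact encard4 hd1
    have h6 : E.encard = 6 := by rw [hE2]; exact encard6 hd2
    rw [h4] at h6
    exact absurd h6 (by decide)
  -- main case analysis
  have hor : (∃ a b : ℤ × ℤ,
        (a.1 * b.2 - a.2 * b.1 = 1 ∨ a.1 * b.2 - a.2 * b.1 = -1) ∧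
        E = {a, -a, b, -b}) ∨
      (∃ a b : ℤ × ℤ, (a.1 * b.2 - a.2 * b.1 = 1 ∨ a.1 * b.2 - a.2 * b.1 = -1) ∧
        E = {a, -a, b, -b, a + b, -(a + b)}) := by
    by_cases hp : a + b ∈ E
    · right
      refine ⟨a, b, hd, ?_⟩
      apply Set.Subset.antisymm
      · intro x hx
        rcases hsub x hx with rfl | rfl | rfl | rfl | rfl | rfl | rfl | rfl
        · simp
        · simp
        · simp
        · simp
        · simp
        · simp
        · exact absurd ⟨hp, hx⟩ hnotboth
        · exact absurd ⟨hp, by simpa using hnegmem _ hx⟩ hnotboth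
      · intro x hx
        simp only [Set.mem_insert_iff, Set.mem_singleton_iff] at hx
        rcases hx with rfl | rfl | rfl | rfl | rfl | rfl
        · exact ha
        · exact hnegmem a ha
        · exact hb
        · exact hnegmem b hb
        · exact hp
        · exact hnegmem _ hp
    · by_cases hm : a - b ∈ E
      · right
        refine ⟨a, -b, ?_, ?_⟩
        · have : a.1 * (-b).2 - a.2 * (-b).1 = -(a.1 * b.2 - a.2 * b.1) := by
            simp only [Prod.fst_neg, Prod.snd_neg]; ring
          rw [this]
          rcases hd with h | h
          · right; omega
          · left; omega
        · have hset : ({a, -a, -b, -(-b), a + -b, -(a + -b)} : Set (ℤ × ℤ)) =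
              {a, -a, b, -b, a - b, -(a - b)} := by
            ext x
            simp only [Set.mem_insert_iff, Set.mem_singleton_iff, neg_neg,
              sub_eq_add_neg]
            tauto
          rw [hset]
          apply Set.Subset.antisymm
          · intro x hx
            rcases hsub x hx with rfl | rfl | rfl | rfl | rfl | rfl | rfl | rfl
            · simp
            · simp
            · simp
            · simp
            · exact absurd hx hp
            · exact absurd (by simpa using hnegmem _ hx) hp
            · simp
            · simp
          · intro x hx
            simp only [Set.mem_insert_iff, Set.mem_singleton_iff] at hx
            rcases hx with rfl | rfl | rfl | rfl | rfl | rfl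
            · exact ha
            · exact hnegmem a ha
            · exact hb
            · exact hnegmem b hb
            · exact hm
            · exact hnegmem _ hm
      · left
        refine ⟨a, b, hd, ?_⟩
        apply Set.Subset.antisymm
        · intro x hx
          rcases hsub x hx with rfl | rfl | rfl | rfl | rfl | rfl | rfl | rfl
          · simp
          · simp
          · simp
          · simp
          · exact absurd hx hp
          · exact absurd (by simpa using hnegmem _ hx) hp
          · exact absurd hx hm
          · exact absurd (by simpa using hnegmem _ hx) hm
        · intro x hx
          simp only [Set.mem_insert_iff, Set.mem_singleton_iff] at hx
          rcases hx with rfl | rfl | rfl | rfl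
          · exact ha
          · exact hnegmem a ha
          · exact hb
          · exact hnegmem b hb
  rcases hor with hA | hB
  · exact Or.inl ⟨hA, fun hB => hexcl ⟨hA, hB⟩⟩
  · exact Or.inr ⟨hB, fun hA => hexcl ⟨hA, hB⟩⟩
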